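/- For every nonnegative integer n, the Bernoulli-Carlitz number satisfies BC_n = Σ_{j ≥ 0, r^j − 1 ≤ n} Σ_{l=0}^{r^j − 1} (−1)^j Π(r^j − 1) · S2_C(n, r^j − 1) · S2_C(r^j − 1, l) · CC_l, where S2_C denotes the Stirling-Carlitz numbers of the second kind and CC_l the Cauchy-Carlitz numbers (the outer sum is finite since S2_C(n, m) = 0 whenever n < m). -/

import Mathlib

open scoped Classical
open PowerSeries Finset

noncomputable section

variable (F : Type) [Field F] [Fintype F]

/-- The rational function field `K = 𝔽_r(T)`. -/
abbrev K : Type := RatFunc F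

/-- `r`, the cardinality of the finite field of constants. -/
def rr : ℕ := Fintype.card F

/-- The variable `T` of the rational function field. -/
def Tv : K F := RatFunc.X

/-- `[i] = T^{r^i} - T`. -/
def br (i : ℕ) : K F := Tv F ^ (rr F) ^ i - Tv F

/-- `D_0 = 1`, `D_i = [i] · D_{i-1}^r`. -/
def D : ℕ → K F
  | 0 => 1
  | i + 1 => br F (i + 1) * D i ^ rr F

/-- `L_0 = 1`, `L_i = [i] · L_{i-1}`. -/
def L : ℕ → K F
  | 0 => 1
  | i + 1 => br F (i + 1) * L i

/-- The Carlitz factorial `Π(n) = ∏_j D_j^{c_j}`, where `c_j = n / r^j % r` are the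
base-`r` digits of `n` (all digits with index `> n` vanish since `r ≥ 2`). -/
def Cf (n : ℕ) : K F := ∏ j ∈ Finset.range (n + 1), D F j ^ (n / (rr F) ^ j % rr F)

/-- The Carlitz logarithm `log_C(z) = Σ_{i ≥ 0} (-1)^i z^{r^i} / L_i`: the coefficient of
`z^m` is `(-1)^i / L_i` if `m = r^i` and `0` otherwise (note `i ≤ r^i = m` since `r ≥ 2`). -/
def logC : PowerSeries (K F) :=
  PowerSeries.mk fun m =>
    ∑ i ∈ Finset.range (m + 1), if m = (rr F) ^ i then (-1 : K F) ^ i / L F i else 0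

/-- The Carlitz exponential `e_C(z) = Σ_{i ≥ 0} z^{r^i} / D_i`. -/
def eC : PowerSeries (K F) :=
  PowerSeries.mk fun m =>
    ∑ i ∈ Finset.range (m + 1), if m = (rr F) ^ i then 1 / D F i else 0

/-- The power series `log_C(z)/z`. -/
def logCdivZ : PowerSeries (K F) :=
  PowerSeries.mk fun n => PowerSeries.coeff (R := K F) (n + 1) (logC F)

/-- The power series `e_C(z)/z`. -/
def eCdivZ : PowerSeries (K F) :=
  PowerSeries.mk fun n => PowerSeries.coeff (R := K F) (n + 1) (eC F)

set_option linter.unusedSectionVars false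

theorem rr_ge2 : 2 ≤ rr F := Fintype.one_lt_card

theorem Tv_pow_sub (m : ℕ) (hm : 2 ≤ m) : (Tv F ^ m - Tv F) ≠ 0 := by
  have h0 : Tv F ^ m - Tv F =
      (algebraMap (Polynomial F) (RatFunc F)) (Polynomial.X ^ m - Polynomial.X) := by
    rw [map_sub, map_pow, RatFunc.algebraMap_X]; rfl
  rw [h0]
  intro h
  have h2 : (Polynomial.X ^ m - Polynomial.X : Polynomial F) = 0 :=
    RatFunc.algebraMap_injective F (by simpa using h)
  have h3 : (Polynomial.X ^ m - Polynomial.X : Polynomial F).coeff m = 1 := by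
    have hne : ¬ (1:ℕ) = m := by omega
    rw [Polynomial.coeff_sub, Polynomial.coeff_X_pow, Polynomial.coeff_X]
    simp [hne]
  rw [h2] at h3
  simp at h3

theorem br_ne (i : ℕ) (hi : 1 ≤ i) : br F i ≠ 0 := by
  apply Tv_pow_sub
  calc 2 ≤ rr F := rr_ge2 F
    _ = rr F ^ 1 := (pow_one _).symm
    _ ≤ rr F ^ i := Nat.pow_le_pow_right (by have := rr_ge2 F; omega) hi
theorem D_ne (i : ℕ) : D F i ≠ 0 := by
  induction i with
  | zero => simp [D]
  | succ i ih =>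
    simp only [D]
    exact mul_ne_zero (br_ne F (i+1) (by omega)) (pow_ne_zero _ ih)

theorem L_ne (i : ℕ) : L F i ≠ 0 := by
  induction i with
  | zero => simp [L]
  | succ i ih =>
    simp only [L]
    exact mul_ne_zero (br_ne F (i+1) (by omega)) ih

theorem Cf_ne (n : ℕ) : Cf F n ≠ 0 := by
  apply Finset.prod_ne_zero_iff.2
  intro i _
  exact pow_ne_zero _ (D_ne F i)

-- digits of r^j - 1
theorem digit_lt (r i j : ℕ) (hr : 2 ≤ r) (hij : i < j) :
    (r ^ j - 1) / r ^ i % r = r - 1 := by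
  set a := r ^ i with ha
  have ha1 : 1 ≤ a := Nat.one_le_pow _ _ (by omega)
  have hc1 : 1 ≤ r ^ (j - i - 1) := Nat.one_le_pow _ _ (by omega)
  have hab : r ^ j = a * (r * r ^ (j - i - 1)) := by
    rw [ha, ← pow_succ', ← pow_add]; congr 1; omega
  obtain ⟨d, hd⟩ : ∃ d, r ^ (j - i - 1) = d + 1 := ⟨_, (Nat.succ_pred_eq_of_pos hc1).symm⟩
  obtain ⟨m, hm⟩ : ∃ m, r * r ^ (j - i - 1) = m + 1 := ⟨_, (Nat.succ_pred_eq_of_pos (by positivity)).symm⟩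
  have h1 : r ^ j - 1 = (a - 1) + a * m := by
    rw [hab, hm]; rw [Nat.mul_add, Nat.mul_one]; omega
  have h2 : (r ^ j - 1) / a = m := by
    rw [h1, Nat.add_mul_div_left _ _ (by omega : 0 < a), Nat.div_eq_of_lt (by omega)]; omega
  have h3 : m = (r - 1) + r * d := by
    have h4 : r * (d + 1) = m + 1 := by rw [← hd, hm]
    have hrd : r * (d+1) = r*d + r := by ring
    omega
  rw [h2, h3, Nat.add_mul_mod_self_left, Nat.mod_eq_of_lt (by omega)]

theorem digit_ge (r i j : ℕ) (hr : 2 ≤ r) (hij : j ≤ i) :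
    (r ^ j - 1) / r ^ i % r = 0 := by
  have h5 : r ^ j ≤ r ^ i := Nat.pow_le_pow_right (by omega) hij
  have h6 : 1 ≤ r ^ j := Nat.one_le_pow _ _ (by omega)
  rw [Nat.div_eq_of_lt (by omega)]; rfl

theorem Cf_zero : Cf F 0 = 1 := by simp [Cf]

theorem Cf_pow_sub_one (j : ℕ) :
    Cf F (rr F ^ j - 1) = ∏ i ∈ Finset.range j, D F i ^ (rr F - 1) := by
  have hr := rr_ge2 F
  have hj : j ≤ rr F ^ j - 1 + 1 := by
    have h1 := Nat.lt_pow_self (n := j) (by omega : 1 < rr F)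
    have h2 : 1 ≤ rr F ^ j := Nat.one_le_pow _ _ (by omega)
    omega
  rw [Cf]
  rw [← Finset.prod_subset (Finset.range_subset_range.2 hj)]
  · apply Finset.prod_congr rfl
    intro i hi
    rw [digit_lt _ _ _ hr (Finset.mem_range.1 hi)]
  · intro i _ hi
    rw [digit_ge _ _ _ hr (by simpa using Finset.mem_range.not.1 hi)]
    rfl

theorem D_eq_L_mul_Cf (j : ℕ) : D F j = L F j * Cf F (rr F ^ j - 1) := by
  have hr := rr_ge2 F
  induction j with
  | zero => simp [D, L, Cf_zero]
  | succ j ih =>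
    rw [Cf_pow_sub_one] at ih ⊢
    rw [Finset.prod_range_succ]
    simp only [D, L]
    rw [show D F j ^ rr F = D F j ^ (rr F - 1) * D F j by
      rw [← pow_succ]; congr 1; omega]
    rw [ih]; ring


section Frob
variable {R : Type} [CommRing R]

theorem coeff_pow_congr (f g : PowerSeries R) (n : ℕ)
    (h : ∀ i ≤ n, PowerSeries.coeff (R := R) i f = PowerSeries.coeff (R := R) i g) (k : ℕ) :
    ∀ m ≤ n, PowerSeries.coeff (R := R) m (f ^ k) = PowerSeries.coeff (R := R) m (g ^ k) := by
  induction k with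
  | zero => intro m _; simp
  | succ k ih =>
    intro m hm
    rw [pow_succ, pow_succ, PowerSeries.coeff_mul, PowerSeries.coeff_mul]
    apply Finset.sum_congr rfl
    intro x hx
    have hab := Finset.HasAntidiagonal.mem_antidiagonal.1 hx
    rw [ih x.1 (by omega), h x.2 (by omega)]

theorem frobenius_pow_apply (p : ℕ) [Fact p.Prime] [CharP R p] (s : ℕ) (a : R) :
    ((frobenius R p ^ s) : R →+* R) a = a ^ p ^ s := by
  induction s with
  | zero => simp [RingHom.one_def]
  | succ s ih =>
    rw [pow_succ, RingHom.mul_def, RingHom.comp_apply, frobenius_def, map_pow, ih,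
      ← pow_mul, ← pow_succ]

theorem coeff_pow_char_pow (p : ℕ) [Fact p.Prime] [CharP R p] (f : PowerSeries R) (s n : ℕ) :
    PowerSeries.coeff (R := R) n (f ^ p ^ s) =
      if p ^ s ∣ n then (PowerSeries.coeff (R := R) (n / p ^ s) f) ^ p ^ s else 0 := by
  set P := PowerSeries.trunc (n + 1) f with hP
  have h : ∀ i ≤ n, PowerSeries.coeff (R := R) i ((P : PowerSeries R)) = PowerSeries.coeff (R := R) i f := by
    intro i hi
    rw [Polynomial.coeff_coe, hP, PowerSeries.coeff_trunc, if_pos (by omega)]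
  have h1 : PowerSeries.coeff (R := R) n (f ^ p ^ s) = (P ^ p ^ s).coeff n := by
    rw [← coeff_pow_congr _ _ n h _ n le_rfl, ← Polynomial.coeff_coe, Polynomial.coe_pow]
  have hq : 0 < p ^ s := pow_pos (Fact.out : p.Prime).pos s
  haveI : ExpChar R p := ExpChar.prime (Fact.out)
  rw [h1, ← Polynomial.map_iterateFrobenius_expand p, Polynomial.coeff_map,
    Polynomial.coeff_expand hq, iterateFrobenius_def]
  split
  · next hdvd => rw [← h _ (Nat.div_le_self _ _), Polynomial.coeff_coe]
  · next hdvd => exact zero_pow (by omega)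

end Frob

theorem charFact : ∃ p e : ℕ, Nat.Prime p ∧ rr F = p ^ e ∧ CharP (K F) p := by
  set p := ringChar F with hp
  haveI : CharP F p := ringChar.charP F
  have hprime : p.Prime := CharP.char_is_prime F p
  obtain ⟨e, _, hcard⟩ := FiniteField.card F p
  exact ⟨p, e, hprime, hcard, charP_of_injective_algebraMap' F (A := RatFunc F) p⟩

theorem coeff_pow_rr (f : PowerSeries (K F)) (j n : ℕ) :
    PowerSeries.coeff (R := K F) n (f ^ (rr F) ^ j) =
      if (rr F) ^ j ∣ n then (PowerSeries.coeff (R := K F) (n / (rr F) ^ j) f) ^ ((rr F) ^ j)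
      else 0 := by
  obtain ⟨p, e, hp, hc, hchar⟩ := charFact F
  haveI : Fact p.Prime := ⟨hp⟩
  haveI := hchar
  rw [hc, ← pow_mul]
  exact coeff_pow_char_pow p f (e * j) n

theorem sub_pow_rr (x y : K F) (j : ℕ) :
    (x - y) ^ (rr F) ^ j = x ^ (rr F) ^ j - y ^ (rr F) ^ j := by
  obtain ⟨p, e, hp, hc, hchar⟩ := charFact F
  haveI : Fact p.Prime := ⟨hp⟩
  haveI := hchar
  haveI : ExpChar (K F) p := ExpChar.prime hp
  rw [hc, ← pow_mul]
  exact sub_pow_char_pow (p := p) x y (e*j)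

theorem sum_pow_rr {ι : Type} (s : Finset ι) (f : ι → K F) (j : ℕ) :
    (∑ i ∈ s, f i) ^ (rr F) ^ j = ∑ i ∈ s, f i ^ (rr F) ^ j := by
  obtain ⟨p, e, hp, hc, hchar⟩ := charFact F
  haveI : Fact p.Prime := ⟨hp⟩
  haveI := hchar
  haveI : ExpChar (K F) p := ExpChar.prime hp
  rw [hc, ← pow_mul]
  exact sum_pow_char_pow (p := p) (e*j) s f
theorem pow_gt (r i : ℕ) (hr : 2 ≤ r) : i < r ^ i := Nat.lt_pow_self (n := i) (by omega)

theorem coeff_eC (m : ℕ) : PowerSeries.coeff (R := K F) m (eC F) =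
    ∑ i ∈ Finset.range (m + 1), if m = (rr F) ^ i then 1 / D F i else 0 := by
  rw [eC, PowerSeries.coeff_mk]

theorem coeff_eC_zero : PowerSeries.coeff (R := K F) 0 (eC F) = 0 := by
  rw [coeff_eC]
  apply Finset.sum_eq_zero
  intro i _
  have : (0:ℕ) ≠ rr F ^ i := by
    have := Nat.one_le_pow i (rr F) (by have := rr_ge2 F; omega)
    omega
  rw [if_neg this]

theorem coeff_eC_pow_vanish (k : ℕ) : ∀ m, m < k →
    PowerSeries.coeff (R := K F) m (eC F ^ k) = 0 := by
  induction k with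
  | zero => intro m hm; omega
  | succ k ih =>
    intro m hm
    rw [pow_succ, PowerSeries.coeff_mul]
    apply Finset.sum_eq_zero
    intro x hx
    have hab := Finset.HasAntidiagonal.mem_antidiagonal.1 hx
    rcases Nat.eq_zero_or_pos x.2 with h2 | h2
    · rw [h2, coeff_eC_zero, mul_zero]
    · rw [ih x.1 (by omega), zero_mul]

theorem coeff_eC_pow_rr (j m : ℕ) :
    PowerSeries.coeff (R := K F) m (eC F ^ (rr F) ^ j) =
      ∑ i ∈ Finset.range (m + 1),
        if m = (rr F) ^ (i + j) then ((D F i)⁻¹) ^ ((rr F) ^ j) else 0 := by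
  have hr := rr_ge2 F
  have hq : 1 ≤ (rr F) ^ j := Nat.one_le_pow _ _ (by omega)
  rw [coeff_pow_rr]
  split
  · next hdvd =>
    rw [coeff_eC, sum_pow_rr]
    rw [← Finset.sum_subset (Finset.range_subset_range.2
        (by have := Nat.div_le_self m ((rr F)^j); omega : m / (rr F)^j + 1 ≤ m + 1))]
    · apply Finset.sum_congr rfl
      intro i hi
      rw [apply_ite (· ^ (rr F) ^ j), zero_pow (by omega), one_div]
      apply if_congr _ rfl rfl
      constructor
      · intro h
        rw [pow_add, ← h, Nat.div_mul_cancel hdvd]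
      · intro h
        exact Nat.div_eq_of_eq_mul_left (by positivity) (by rw [h, pow_add])
    · intro i _ hi
      simp only [Finset.mem_range] at hi
      have hgt : m / (rr F)^j < i := by omega
      rw [if_neg]
      intro h
      have h1 : m / (rr F)^j = (rr F)^i :=
        Nat.div_eq_of_eq_mul_left (by positivity) (by rw [h, pow_add])
      have := pow_gt (rr F) i hr
      omega
  · next hdvd =>
    symm
    apply Finset.sum_eq_zero
    intro i _
    rw [if_neg]
    intro h
    exact hdvd ⟨(rr F)^i, by rw [h, pow_add, mul_comm]⟩

theorem br_split (j k : ℕ) (hjk : j ≤ k) :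
    br F k = br F j + br F (k - j) ^ (rr F) ^ j := by
  simp only [br]
  rw [sub_pow_rr, ← pow_mul, ← pow_add]
  rw [show k - j + j = k by omega]
  ring

theorem midalg (A B Lv Dv c : K F) (hA : A ≠ 0) (hB : B ≠ 0) (hL : Lv ≠ 0) (hD : Dv ≠ 0) :
    (A + B) * (c * ((A * Lv) * (B * Dv))⁻¹)
      = c * (Lv * (B * Dv))⁻¹ + c * ((A * Lv) * Dv)⁻¹ := by
  field_simp

theorem telescope (k : ℕ) (hk : 1 ≤ k) :
    ∑ j ∈ Finset.range (k + 1), (-1 : K F) ^ j * (L F j * D F (k - j) ^ (rr F) ^ j)⁻¹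
      = 0 := by
  have hbrk := br_ne F k hk
  apply mul_left_cancel₀ hbrk
  rw [mul_zero, Finset.mul_sum]
  set g : ℕ → K F := fun j =>
    if j = 0 ∨ j = k + 1 then 0
    else (-1 : K F) ^ j * (L F (j - 1) * D F (k - j) ^ (rr F) ^ j)⁻¹ with hg
  have key : ∀ j ∈ Finset.range (k + 1),
      br F k * ((-1 : K F) ^ j * (L F j * D F (k - j) ^ (rr F) ^ j)⁻¹) = g j - g (j + 1) := by
    intro j hj
    rw [Finset.mem_range] at hj
    rcases eq_or_ne j 0 with rfl | hj0
    · -- j = 0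
      have hgk : g 0 = 0 := by simp only [hg]; simp
      have hg1 : g 1 = -(L F 0 * D F (k - 1) ^ (rr F) ^ 1)⁻¹ := by
        simp only [hg]
        rw [if_neg (by omega : ¬((1:ℕ) = 0 ∨ 1 = k + 1))]
        simp
      rw [hgk, hg1]
      have hD : D F k = br F k * D F (k - 1) ^ rr F := by
        conv_lhs => rw [show k = (k - 1) + 1 by omega]
        rw [D]
        rw [show k - 1 + 1 = k by omega]
      simp only [pow_zero, one_mul, pow_one, Nat.sub_zero, L]
      rw [hD]
      have h1 : br F k ≠ 0 := hbrk
      have h2 : D F (k-1) ^ rr F ≠ 0 := pow_ne_zero _ (D_ne F _)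
      field_simp
      ring
    · rcases eq_or_ne j k with heq | hjk
      · -- j = k
        rw [heq]
        have hgk1 : g (k + 1) = 0 := by simp only [hg]; simp
        have hgk : g k = (-1 : K F) ^ k * (L F (k - 1) * D F (k - k) ^ (rr F) ^ k)⁻¹ := by
          simp only [hg]
          rw [if_neg (by omega)]
        rw [hgk1, hgk, Nat.sub_self]
        have hL : L F k = br F k * L F (k - 1) := by
          conv_lhs => rw [show k = (k - 1) + 1 by omega]
          rw [L]
          rw [show k - 1 + 1 = k by omega]
        simp only [D, one_pow, mul_one]
        rw [hL]
        have h1 : br F k ≠ 0 := hbrk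
        have h2 : L F (k-1) ≠ 0 := L_ne F _
        field_simp
        ring
      · -- 0 < j < k
        have hjlt : j < k := by omega
        have hbs := br_split F j k (by omega)
        have hgj : g j = (-1 : K F) ^ j * (L F (j - 1) * D F (k - j) ^ (rr F) ^ j)⁻¹ := by
          simp only [hg]
          rw [if_neg (by omega)]
        have hgj1 : g (j + 1) =
            (-1 : K F) ^ (j+1) * (L F j * D F (k - (j+1)) ^ (rr F) ^ (j+1))⁻¹ := by
          simp only [hg]
          rw [if_neg (by omega)]
          simp only [Nat.add_sub_cancel]
        have hL : L F j = br F j * L F (j - 1) := by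
          conv_lhs => rw [show j = (j - 1) + 1 by omega]
          rw [L]
          rw [show j - 1 + 1 = j by omega]
        have hD : D F (k - j) = br F (k - j) * D F (k - j - 1) ^ rr F := by
          conv_lhs => rw [show k - j = (k - j - 1) + 1 by omega]
          rw [D]
          rw [show k - j - 1 + 1 = k - j by omega]
        have hkj1 : k - (j+1) = k - j - 1 := by omega
        have hrw : D F (k - j) ^ (rr F) ^ j
            = br F (k - j) ^ (rr F) ^ j * D F (k - j - 1) ^ (rr F) ^ (j + 1) := by
          rw [hD, mul_pow, ← pow_mul, ← pow_succ']
        have hx : (-1 : K F) ^ (j+1) = -(-1 : K F) ^ j := by rw [pow_succ]; ring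
        rw [hgj, hgj1, hx, hbs, hL, hrw, hkj1, neg_mul, sub_neg_eq_add]
        exact midalg F _ _ _ _ _ (br_ne F _ (by omega))
          (pow_ne_zero _ (br_ne F _ (by omega))) (L_ne F _) (pow_ne_zero _ (D_ne F _))
  rw [Finset.sum_congr rfl key, Finset.sum_range_sub' g]
  simp only [hg]
  simp

/-- Auxiliary: "substitution of `eC` into the series with coefficients `f`". -/
def Tr (f : ℕ → K F) : PowerSeries (K F) :=
  PowerSeries.mk fun m => ∑ l ∈ Finset.range (m + 1), f l * PowerSeries.coeff (R := K F) m (eC F ^ l)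

theorem coeff_Tr (f : ℕ → K F) (m N : ℕ) (hN : m < N) :
    PowerSeries.coeff (R := K F) m (Tr F f)
      = ∑ l ∈ Finset.range N, f l * PowerSeries.coeff (R := K F) m (eC F ^ l) := by
  rw [Tr, PowerSeries.coeff_mk]
  apply Finset.sum_subset (Finset.range_subset_range.2 (by omega))
  intro l _ hl
  rw [Finset.mem_range] at hl
  rw [coeff_eC_pow_vanish F l m (by omega), mul_zero]

theorem Tr_mul (f g : ℕ → K F) :
    Tr F f * Tr F g = Tr F (fun k => ∑ i ∈ Finset.range (k + 1), f i * g (k - i)) := by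
  ext m
  rw [PowerSeries.coeff_mul]
  have hL : ∀ x ∈ Finset.HasAntidiagonal.antidiagonal m,
      PowerSeries.coeff (R := K F) x.1 (Tr F f) * PowerSeries.coeff (R := K F) x.2 (Tr F g)
        = ∑ i ∈ Finset.range (m+1), ∑ j ∈ Finset.range (m+1),
            f i * g j * (PowerSeries.coeff (R := K F) x.1 (eC F ^ i) *
              PowerSeries.coeff (R := K F) x.2 (eC F ^ j)) := by
    intro x hx
    have hab := Finset.HasAntidiagonal.mem_antidiagonal.1 hx
    rw [coeff_Tr F f x.1 (m+1) (by omega), coeff_Tr F g x.2 (m+1) (by omega),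
      Finset.sum_mul_sum]
    apply Finset.sum_congr rfl; intro i _
    apply Finset.sum_congr rfl; intro j _
    ring
  rw [Finset.sum_congr rfl hL]
  rw [Finset.sum_comm]
  have hswap : ∀ i ∈ Finset.range (m+1),
      ∑ x ∈ Finset.HasAntidiagonal.antidiagonal m, ∑ j ∈ Finset.range (m+1),
          f i * g j * (PowerSeries.coeff (R := K F) x.1 (eC F ^ i) *
            PowerSeries.coeff (R := K F) x.2 (eC F ^ j))
        = ∑ j ∈ Finset.range (m+1), f i * g j * PowerSeries.coeff (R := K F) m (eC F ^ (i + j)) := by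
    intro i _
    rw [Finset.sum_comm]
    apply Finset.sum_congr rfl; intro j _
    rw [← Finset.mul_sum, ← PowerSeries.coeff_mul, ← pow_add]
  rw [Finset.sum_congr rfl hswap]
  -- now both sides are sums of h over index sets
  rw [Tr, PowerSeries.coeff_mk]
  have hR : ∀ k ∈ Finset.range (m+1),
      (∑ i ∈ Finset.range (k + 1), f i * g (k - i)) * PowerSeries.coeff (R := K F) m (eC F ^ k)
        = ∑ i ∈ Finset.range (k + 1),
            f i * g (k - i) * PowerSeries.coeff (R := K F) m (eC F ^ (i + (k - i))) := by
    intro k hk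
    rw [Finset.sum_mul]
    apply Finset.sum_congr rfl; intro i hi
    rw [Finset.mem_range] at hi
    rw [show i + (k - i) = k by omega]
  rw [Finset.sum_congr rfl hR]
  -- reduce both sides to a sum over the filtered square
  set h : ℕ × ℕ → K F := fun x =>
    f x.1 * g x.2 * PowerSeries.coeff (R := K F) m (eC F ^ (x.1 + x.2)) with hh
  have hzero : ∀ x : ℕ × ℕ, m < x.1 + x.2 → h x = 0 := by
    intro x hx
    rw [hh]
    simp only
    rw [coeff_eC_pow_vanish F _ m hx, mul_zero]
  have hLHS : ∑ i ∈ Finset.range (m+1), ∑ j ∈ Finset.range (m+1),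
      f i * g j * PowerSeries.coeff (R := K F) m (eC F ^ (i + j))
      = ∑ x ∈ (Finset.range (m+1) ×ˢ Finset.range (m+1)).filter
          (fun x => x.1 + x.2 ≤ m), h x := by
    rw [← Finset.sum_product']
    rw [Finset.sum_filter_of_ne]
    intro x _ hx
    by_contra hc
    exact hx (hzero x (by omega))
  rw [hLHS]
  have hset : (Finset.range (m+1) ×ˢ Finset.range (m+1)).filter (fun x => x.1 + x.2 ≤ m)
      = (Finset.range (m+1)).biUnion (fun k => Finset.HasAntidiagonal.antidiagonal k) := by
    ext x
    simp only [Finset.mem_filter, Finset.mem_product, Finset.mem_range, Finset.mem_biUnion,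
      Finset.HasAntidiagonal.mem_antidiagonal]
    constructor
    · intro hx; exact ⟨x.1 + x.2, by omega, rfl⟩
    · rintro ⟨k, hk, rfl⟩; omega
  rw [hset, Finset.sum_biUnion]
  · apply Finset.sum_congr rfl
    intro k _
    rw [Finset.Nat.sum_antidiagonal_eq_sum_range_succ_mk]
  · intro a _ b _ hab
    simp only [Function.onFun]
    apply Finset.disjoint_left.2
    intro x hx1 hx2
    rw [Finset.HasAntidiagonal.mem_antidiagonal] at hx1 hx2
    omega

theorem eC_mul_Tr (f : ℕ → K F) :
    eC F * Tr F f = Tr F (fun k => if k = 0 then 0 else f (k - 1)) := by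
  ext m
  rw [PowerSeries.coeff_mul]
  have h1 : ∀ x ∈ Finset.HasAntidiagonal.antidiagonal m,
      PowerSeries.coeff (R := K F) x.1 (eC F) * PowerSeries.coeff (R := K F) x.2 (Tr F f)
        = ∑ l ∈ Finset.range (m+1),
            f l * (PowerSeries.coeff (R := K F) x.1 (eC F) *
              PowerSeries.coeff (R := K F) x.2 (eC F ^ l)) := by
    intro x hx
    have hab := Finset.HasAntidiagonal.mem_antidiagonal.1 hx
    rw [coeff_Tr F f x.2 (m+1) (by omega), Finset.mul_sum]
    apply Finset.sum_congr rfl; intro l _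
    ring
  rw [Finset.sum_congr rfl h1, Finset.sum_comm]
  have h2 : ∀ l ∈ Finset.range (m+1),
      ∑ x ∈ Finset.HasAntidiagonal.antidiagonal m,
          f l * (PowerSeries.coeff (R := K F) x.1 (eC F) * PowerSeries.coeff (R := K F) x.2 (eC F ^ l))
        = f l * PowerSeries.coeff (R := K F) m (eC F ^ (l + 1)) := by
    intro l _
    rw [← Finset.mul_sum, ← PowerSeries.coeff_mul, pow_succ']
  rw [Finset.sum_congr rfl h2]
  rw [coeff_Tr F _ m (m+2) (by omega), Finset.sum_range_succ' _ (m+1)]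
  simp

theorem Tr_delta : Tr F (fun k => if k = 0 then 1 else 0) = 1 := by
  ext m
  rw [Tr, PowerSeries.coeff_mk]
  have : ∀ l ∈ Finset.range (m+1),
      (if l = 0 then (1:K F) else 0) * PowerSeries.coeff (R := K F) m (eC F ^ l)
        = if l = 0 then PowerSeries.coeff (R := K F) m (eC F ^ l) else 0 := by
    intro l _
    split <;> simp
  rw [Finset.sum_congr rfl this, Finset.sum_ite_eq' (Finset.range (m+1)) 0]
  rw [if_pos (by simp), pow_zero]

theorem eC_eq_X_mul : eC F = PowerSeries.X * eCdivZ F := by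
  ext m
  cases m with
  | zero =>
    rw [coeff_eC_zero]
    simp
  | succ m =>
    rw [PowerSeries.coeff_succ_X_mul, eCdivZ, PowerSeries.coeff_mk]

theorem coeff_logC_zero : PowerSeries.coeff (R := K F) 0 (logC F) = 0 := by
  rw [logC, PowerSeries.coeff_mk]
  apply Finset.sum_eq_zero
  intro i _
  have : (0:ℕ) ≠ rr F ^ i := by
    have := Nat.one_le_pow i (rr F) (by have := rr_ge2 F; omega)
    omega
  rw [if_neg this]

theorem Tr_logC_eq_X : Tr F (fun k => PowerSeries.coeff (R := K F) k (logC F)) = PowerSeries.X := by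
  have hr := rr_ge2 F
  ext m
  rw [Tr, PowerSeries.coeff_mk, PowerSeries.coeff_X]
  -- expand logC coefficients and push the outer factor inside
  have h1 : ∀ k ∈ Finset.range (m+1),
      PowerSeries.coeff (R := K F) k (logC F) * PowerSeries.coeff (R := K F) m (eC F ^ k)
        = ∑ i ∈ Finset.range (m+1),
            if k = rr F ^ i
            then ((-1:K F)^i / L F i) * PowerSeries.coeff (R := K F) m (eC F ^ k) else 0 := by
    intro k hk
    rw [Finset.mem_range] at hk
    rw [logC, PowerSeries.coeff_mk, Finset.sum_mul]
    rw [← Finset.sum_subset (Finset.range_subset_range.2 (by omega : k + 1 ≤ m + 1))]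
    · apply Finset.sum_congr rfl
      intro i _
      rw [ite_mul, zero_mul]
    · intro i hi1 hi2
      rw [Finset.mem_range] at hi1 hi2
      have hne : ¬ k = rr F ^ i := by
        intro h
        have := pow_gt (rr F) i hr
        omega
      rw [if_neg hne]
  rw [Finset.sum_congr rfl h1, Finset.sum_comm]
  -- collapse the inner sum over k
  have h2 : ∀ i ∈ Finset.range (m+1),
      (∑ k ∈ Finset.range (m+1),
        if k = rr F ^ i
        then ((-1:K F)^i / L F i) * PowerSeries.coeff (R := K F) m (eC F ^ k) else 0)
      = if rr F ^ i ∈ Finset.range (m+1)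
        then ((-1:K F)^i / L F i) * PowerSeries.coeff (R := K F) m (eC F ^ (rr F ^ i)) else 0 := by
    intro i _
    rw [Finset.sum_ite_eq' (Finset.range (m+1)) (rr F ^ i)]
  rw [Finset.sum_congr rfl h2]
  -- expand eC ^ (r^i) and push inside
  have h3 : ∀ i ∈ Finset.range (m+1),
      (if rr F ^ i ∈ Finset.range (m+1)
        then ((-1:K F)^i / L F i) * PowerSeries.coeff (R := K F) m (eC F ^ (rr F ^ i)) else 0)
      = ∑ i' ∈ Finset.range (m+1),
          if m = rr F ^ (i' + i)
          then ((-1:K F)^i / L F i) * ((D F i')⁻¹) ^ (rr F ^ i) else 0 := by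
    intro i _
    rcases Finset.decidableMem (rr F ^ i) (Finset.range (m+1)) with hmem | hmem
    · rw [if_neg hmem]
      symm
      apply Finset.sum_eq_zero
      intro i' _
      rw [if_neg]
      intro h
      apply hmem
      rw [Finset.mem_range]
      have h4 : rr F ^ i ≤ rr F ^ (i' + i) := Nat.pow_le_pow_right (by omega) (by omega)
      omega
    · rw [if_pos hmem, coeff_eC_pow_rr, Finset.mul_sum]
      apply Finset.sum_congr rfl
      intro i' _
      rw [mul_ite, mul_zero]
  rw [Finset.sum_congr rfl h3]
  -- now split on whether m is a power of r
  by_cases hex : ∃ c, m = rr F ^ c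
  · obtain ⟨c, rfl⟩ := hex
    have hcm : c < rr F ^ c := pow_gt (rr F) c hr
    have h5 : ∀ i ∈ Finset.range (rr F ^ c + 1),
        (∑ i' ∈ Finset.range (rr F ^ c + 1),
          if rr F ^ c = rr F ^ (i' + i)
          then ((-1:K F)^i / L F i) * ((D F i')⁻¹) ^ (rr F ^ i) else 0)
        = if i ≤ c then ((-1:K F)^i / L F i) * ((D F (c - i))⁻¹) ^ (rr F ^ i) else 0 := by
      intro i _
      have hinj := Nat.pow_right_injective hr
      rcases le_or_gt i c with hic | hic
      · rw [if_pos hic]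
        rw [Finset.sum_eq_single_of_mem (c - i) (by rw [Finset.mem_range]; omega)
          (fun b _ hb => by rw [if_neg]; intro h; have := hinj h; omega)]
        rw [if_pos (by congr 1; omega)]
      · rw [if_neg (by omega)]
        apply Finset.sum_eq_zero
        intro i' _
        rw [if_neg]
        intro h
        have := hinj h
        omega
    rw [Finset.sum_congr rfl h5]
    rw [← Finset.sum_subset (Finset.range_subset_range.2 (by omega : c + 1 ≤ rr F ^ c + 1))]
    · have h6 : ∀ i ∈ Finset.range (c+1),
          (if i ≤ c then ((-1:K F)^i / L F i) * ((D F (c - i))⁻¹) ^ (rr F ^ i) else 0)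
          = (-1:K F)^i * (L F i * D F (c - i) ^ (rr F ^ i))⁻¹ := by
        intro i hi
        rw [Finset.mem_range] at hi
        rw [if_pos (by omega)]
        rw [mul_inv, div_eq_mul_inv, inv_pow]
        ring
      rw [Finset.sum_congr rfl h6]
      rcases Nat.eq_zero_or_pos c with rfl | hc
      · simp [L, D]
      · rw [telescope F c hc, if_neg]
        have h7 : rr F ^ 1 ≤ rr F ^ c := Nat.pow_le_pow_right (by omega) hc
        rw [pow_one] at h7
        omega
    · intro i _ hi
      rw [Finset.mem_range] at hi
      rw [if_neg (by omega)]
  · rw [if_neg (by intro h; exact hex ⟨0, by rw [h, pow_zero]⟩)]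
    apply Finset.sum_eq_zero
    intro i _
    apply Finset.sum_eq_zero
    intro i' _
    rw [if_neg (fun h => hex ⟨i' + i, h⟩)]

theorem coeff_eC_rpow (j : ℕ) :
    PowerSeries.coeff (R := K F) ((rr F) ^ j) (eC F) = (D F j)⁻¹ := by
  have hr := rr_ge2 F
  rw [coeff_eC]
  rw [Finset.sum_eq_single_of_mem j
    (by rw [Finset.mem_range]; have := pow_gt (rr F) j hr; omega)
    (fun b _ hb => by
      rw [if_neg]
      intro h
      exact hb (Nat.pow_right_injective hr h.symm))]
  rw [if_pos rfl, one_div]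

theorem eCdivZ_mul_Tr :
    eCdivZ F * Tr F (fun k => PowerSeries.coeff (R := K F) k (logCdivZ F)) = 1 := by
  have hXne : (PowerSeries.X : PowerSeries (K F)) ≠ 0 := PowerSeries.X_ne_zero
  apply mul_left_cancel₀ hXne
  rw [mul_one, ← mul_assoc, ← eC_eq_X_mul, eC_mul_Tr]
  rw [show (fun k => if k = 0 then (0 : K F)
      else PowerSeries.coeff (R := K F) (k - 1) (logCdivZ F))
      = fun k => PowerSeries.coeff (R := K F) k (logC F) by
    funext k
    cases k with
    | zero => rw [if_pos rfl, coeff_logC_zero]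
    | succ k =>
      rw [if_neg (by omega), Nat.add_sub_cancel, logCdivZ, PowerSeries.coeff_mk]]
  exact Tr_logC_eq_X F

/-- Theorem: `BC_n = Σ_{j ≥ 0, r^j - 1 ≤ n} Σ_{l=0}^{r^j - 1}
(-1)^j Π(r^j - 1) · S2_C(n, r^j - 1) · S2_C(r^j - 1, l) · CC_l`.
(Any `j` with `r^j - 1 ≤ n` satisfies `j ≤ n` since `r ≥ 2`.) -/
theorem bernoulliCarlitz_eq_double_sum
    (BC CC : ℕ → K F) (S2C : ℕ → ℕ → K F)
    (hBC : (PowerSeries.mk fun n => BC n / Cf F n) * eCdivZ F = 1)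
    (hCC : (PowerSeries.mk fun n => CC n / Cf F n) * logCdivZ F = 1)
    (hS2C : ∀ n k : ℕ,
      PowerSeries.coeff (R := K F) n (eC F ^ k) / Cf F k = S2C n k / Cf F n)
    (n : ℕ) :
    BC n = ∑ j ∈ (Finset.range (n + 1)).filter (fun j => (rr F) ^ j - 1 ≤ n),
      ∑ l ∈ Finset.range ((rr F) ^ j - 1 + 1),
        (-1 : K F) ^ j * Cf F ((rr F) ^ j - 1) *
          S2C n ((rr F) ^ j - 1) * S2C ((rr F) ^ j - 1) l * CC l := by
  have hr := rr_ge2 F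
  set p : ℕ → K F := fun k => PowerSeries.coeff (R := K F) k (logCdivZ F) with hp
  set q : ℕ → K F := fun l => CC l / Cf F l with hq
  have hinv : eCdivZ F * Tr F p = 1 := eCdivZ_mul_Tr F
  have hS2 : ∀ a k : ℕ, S2C a k = PowerSeries.coeff (R := K F) a (eC F ^ k) / Cf F k * Cf F a := by
    intro a k
    symm
    rw [hS2C a k, div_mul_cancel₀ _ (Cf_ne F a)]
  have hBCeq : (PowerSeries.mk fun m => BC m / Cf F m) = Tr F p := by
    calc (PowerSeries.mk fun m => BC m / Cf F m)
        = (PowerSeries.mk fun m => BC m / Cf F m) * (eCdivZ F * Tr F p) := by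
          rw [hinv, mul_one]
      _ = ((PowerSeries.mk fun m => BC m / Cf F m) * eCdivZ F) * Tr F p := by ring
      _ = Tr F p := by rw [hBC, one_mul]
  have hTrq : Tr F q = eCdivZ F := by
    have h1 : Tr F q * Tr F p = 1 := by
      rw [Tr_mul]
      have h2 : (fun k => ∑ i ∈ Finset.range (k + 1), q i * p (k - i))
          = fun k => if k = 0 then (1 : K F) else 0 := by
        funext k
        have h3 : ∑ i ∈ Finset.range (k + 1), q i * p (k - i)
            = PowerSeries.coeff (R := K F) k
                ((PowerSeries.mk fun m => CC m / Cf F m) * logCdivZ F) := by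
          rw [PowerSeries.coeff_mul, Finset.Nat.sum_antidiagonal_eq_sum_range_succ_mk]
          apply Finset.sum_congr rfl
          intro i _
          rw [PowerSeries.coeff_mk]
        rw [h3, hCC, PowerSeries.coeff_one]
      rw [h2, Tr_delta]
    calc Tr F q = Tr F q * (eCdivZ F * Tr F p) := by rw [hinv, mul_one]
      _ = eCdivZ F * (Tr F q * Tr F p) := by ring
      _ = eCdivZ F := by rw [h1, mul_one]
  -- the inner sums
  have hsum_l : ∀ j : ℕ,
      ∑ l ∈ Finset.range ((rr F) ^ j - 1 + 1),
        (-1 : K F) ^ j * Cf F ((rr F) ^ j - 1) *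
          S2C n ((rr F) ^ j - 1) * S2C ((rr F) ^ j - 1) l * CC l
      = (-1 : K F) ^ j * Cf F n *
          PowerSeries.coeff (R := K F) n (eC F ^ ((rr F) ^ j - 1)) * (L F j)⁻¹ := by
    intro j
    set m := (rr F) ^ j - 1 with hm
    have hstep : ∀ l, (-1 : K F) ^ j * Cf F m * S2C n m * S2C m l * CC l
        = ((-1 : K F) ^ j * Cf F m * S2C n m * Cf F m) *
            (q l * PowerSeries.coeff (R := K F) m (eC F ^ l)) := by
      intro l
      rw [hS2 m l, hq]
      have hCfl := Cf_ne F l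
      field_simp
    rw [Finset.sum_congr rfl (fun l _ => hstep l), ← Finset.mul_sum]
    have hcoeffTrq : ∑ l ∈ Finset.range (m + 1),
        q l * PowerSeries.coeff (R := K F) m (eC F ^ l)
        = PowerSeries.coeff (R := K F) m (Tr F q) := by
      rw [Tr, PowerSeries.coeff_mk]
    rw [hcoeffTrq, hTrq, eCdivZ, PowerSeries.coeff_mk]
    have hm1 : m + 1 = (rr F) ^ j := by
      have : 1 ≤ (rr F) ^ j := Nat.one_le_pow _ _ (by omega)
      omega
    rw [hm1, coeff_eC_rpow, hS2 n m, D_eq_L_mul_Cf]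
    rw [← hm]
    have h1 := Cf_ne F m
    have h2 := L_ne F j
    have h3 := Cf_ne F n
    field_simp
  rw [Finset.sum_congr rfl (fun j _ => hsum_l j)]
  -- compute BC n
  have hBCn : BC n = Cf F n * PowerSeries.coeff (R := K F) n (Tr F p) := by
    have h4 := congrArg (PowerSeries.coeff (R := K F) n) hBCeq
    rw [PowerSeries.coeff_mk] at h4
    rw [← h4, mul_div_cancel₀ _ (Cf_ne F n)]
  -- expand coeff n (Tr p)
  have hLHS : PowerSeries.coeff (R := K F) n (Tr F p)
      = ∑ i ∈ Finset.range (n + 2),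
          if (rr F) ^ i - 1 ≤ n
          then (-1 : K F) ^ i * PowerSeries.coeff (R := K F) n (eC F ^ ((rr F) ^ i - 1)) * (L F i)⁻¹
          else 0 := by
    rw [Tr, PowerSeries.coeff_mk]
    have h5 : ∀ k ∈ Finset.range (n + 1),
        p k * PowerSeries.coeff (R := K F) n (eC F ^ k)
        = ∑ i ∈ Finset.range (n + 2),
            if k = (rr F) ^ i - 1
            then (-1 : K F) ^ i / L F i * PowerSeries.coeff (R := K F) n (eC F ^ k) else 0 := by
      intro k hk
      rw [Finset.mem_range] at hk
      rw [hp]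
      simp only [logCdivZ, PowerSeries.coeff_mk, logC]
      rw [Finset.sum_mul]
      rw [← Finset.sum_subset (Finset.range_subset_range.2 (by omega : k + 2 ≤ n + 2))]
      · apply Finset.sum_congr rfl
        intro i _
        rw [ite_mul, zero_mul]
        have hpos : 1 ≤ (rr F) ^ i := Nat.one_le_pow _ _ (by omega)
        apply if_congr _ rfl rfl
        omega
      · intro i hi1 hi2
        rw [Finset.mem_range] at hi1 hi2
        have hne : ¬ k = (rr F) ^ i - 1 := by
          have := pow_gt (rr F) i hr
          omega
        rw [if_neg hne]
    rw [Finset.sum_congr rfl h5, Finset.sum_comm]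
    apply Finset.sum_congr rfl
    intro i _
    rw [Finset.sum_ite_eq' (Finset.range (n + 1)) ((rr F) ^ i - 1)]
    apply if_congr _ _ rfl
    · rw [Finset.mem_range]
      omega
    · rw [div_eq_mul_inv]
      ring
  rw [hBCn, hLHS, Finset.sum_range_succ, if_neg (by
    have := pow_gt (rr F) (n + 1) hr
    omega), add_zero, Finset.mul_sum, Finset.sum_filter]
  apply Finset.sum_congr rfl
  intro j _
  rw [mul_ite, mul_zero]
  apply if_congr Iff.rfl _ rfl
  ring
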